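/- arXiv:0911.1620 — 2 statements merged into one kernel-verified Lean document; each statement's English description precedes it below -/
import Mathlib

section
/- Let E be a module over a commutative ring A, H a hyperplane of E (E/H free of rank 1), and φ an A-endomorphism of E fixing H pointwise such that the induced endomorphism of E/H is multiplication by a scalar a with a - 1 invertible. Then there exists a unique line submodule L of E such that E = H ⊕ L and φ(L) ⊆ L. -/
theorem gen_of_rank_one (A M : Type*) [CommRing A] [Nontrivial A] [AddCommGroup M] [Module A M]
    [Module.Free A M] (h : Module.rank A M = 1) :
    ∃ v : M, (∀ x : M, ∃ c : A, x = c • v) ∧ ∀ c : A, c • v = 0 → c = 0 := by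
  have hb := Module.Free.chooseBasis A M
  have hcard : Cardinal.mk (Module.Free.ChooseBasisIndex A M) = 1 := by
    rw [← Module.Free.rank_eq_card_chooseBasisIndex, h]
  obtain ⟨hsub, hne⟩ := Cardinal.eq_one_iff_unique.mp hcard
  obtain ⟨i0⟩ := hne
  haveI : Unique (Module.Free.ChooseBasisIndex A M) := ⟨⟨i0⟩, fun j => Subsingleton.elim _ _⟩
  haveI : Fintype (Module.Free.ChooseBasisIndex A M) := Fintype.ofSubsingleton i0
  set b := hb
  refine ⟨b default, ?_, ?_⟩
  · intro x
    refine ⟨b.repr x default, ?_⟩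
    have := b.sum_repr x
    rw [Finset.sum_eq_single default (fun j _ hj => absurd (Subsingleton.elim j default) hj)
      (by simp)] at this
    exact this.symm
  · intro c hc
    have := congrArg (fun y => b.repr y default) hc
    simpa using this

theorem stmt_3 (A : Type*) [CommRing A] (E : Type*) [AddCommGroup E] [Module A E]
    (H : Submodule A E) (hfree : Module.Free A (E ⧸ H))
    (hrank : Module.rank A (E ⧸ H) = 1)
    (φ : E →ₗ[A] E) (hφH : ∀ s ∈ H, φ s = s)
    (a : A)
    (hhom : ∀ x : E, (Submodule.Quotient.mk (φ x) : E ⧸ H) =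
      a • (Submodule.Quotient.mk x : E ⧸ H))
    (ha : IsUnit (a - 1)) :
    ∃! L : Submodule A E,
      (Module.Free A L ∧ Module.rank A L = 1) ∧ IsCompl H L ∧ L.map φ ≤ L := by
  by_cases hA : Subsingleton A
  · haveI := hA
    haveI : Subsingleton E := Module.subsingleton A E
    haveI : Subsingleton (Submodule A E) :=
      ⟨fun L L' => by ext x; rw [Subsingleton.elim x 0]; simp⟩
    refine ⟨⊥, ⟨⟨inferInstance, rank_subsingleton A _⟩, ?_, ?_⟩, fun L _ => Subsingleton.elim _ _⟩
    · rw [Subsingleton.elim H ⊤]; exact isCompl_top_bot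
    · simp
  haveI : Nontrivial A := not_subsingleton_iff_nontrivial.mp hA
  haveI := hfree
  obtain ⟨eb, hgen, hinj⟩ := gen_of_rank_one A (E ⧸ H) hrank
  obtain ⟨e, he⟩ := H.mkQ_surjective eb
  obtain ⟨u, hu⟩ := ha
  set h0 : E := ((↑u⁻¹ : A)) • (φ e - a • e) with h0def
  have hmem : φ e - a • e ∈ H := by
    rw [← Submodule.Quotient.mk_eq_zero]
    have h1 := hhom e
    rw [Submodule.Quotient.mk_sub, Submodule.Quotient.mk_smul, h1, sub_self]
  have h0mem : h0 ∈ H := H.smul_mem _ hmem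
  set w : E := e + h0 with wdef
  have hqw : H.mkQ w = eb := by
    rw [wdef, map_add, Submodule.mkQ_apply, Submodule.mkQ_apply,
      (Submodule.Quotient.mk_eq_zero H).mpr h0mem, add_zero]
    exact he
  have hkey : (a - 1) • h0 = φ e - a • e := by
    rw [← hu, h0def, smul_smul, Units.mul_inv, one_smul]
  have hφw : φ w = a • w := by
    have hφe : φ e = a • e + (a - 1) • h0 := by rw [hkey]; abel
    rw [wdef, map_add, hφH h0 h0mem, hφe, smul_add, sub_smul, one_smul]
    abel
  set L := Submodule.span A {w} with Ldef
  have hwmem : w ∈ L := Submodule.mem_span_singleton_self w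
  have hwinj : ∀ c : A, c • w = 0 → c = 0 := by
    intro c hc
    apply hinj
    have := congrArg H.mkQ hc
    simpa [map_smul, hqw] using this
  have hdisj : Disjoint H L := by
    rw [Submodule.disjoint_def]
    intro x hxH hxL
    obtain ⟨c, hc⟩ := Submodule.mem_span_singleton.mp hxL
    have hq : H.mkQ x = 0 := by
      rw [Submodule.mkQ_apply, Submodule.Quotient.mk_eq_zero]; exact hxH
    have hc0 : c • eb = 0 := by
      rw [← hc] at hq; simpa [map_smul, hqw] using hq
    rw [← hc, hinj c hc0, zero_smul]
  have hcod : Codisjoint H L := by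
    rw [codisjoint_iff_le_sup]
    intro x _
    obtain ⟨c, hc⟩ := hgen (H.mkQ x)
    have hx : x - c • w ∈ H := by
      rw [← Submodule.Quotient.mk_eq_zero (p := H), Submodule.Quotient.mk_sub,
        Submodule.Quotient.mk_smul]
      rw [show (Submodule.Quotient.mk x : E ⧸ H) = H.mkQ x from rfl,
        show (Submodule.Quotient.mk w : E ⧸ H) = H.mkQ w from rfl, hqw, hc, sub_self]
    have hxe : x = (x - c • w) + c • w := by abel
    rw [hxe]
    exact Submodule.add_mem_sup hx (Submodule.smul_mem _ _ hwmem)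
  have hcompl : IsCompl H L := ⟨hdisj, hcod⟩
  have hfinj : Function.Injective (LinearMap.toSpanSingleton A E w) := by
    intro c d hcd
    have : (c - d) • w = 0 := by
      rw [sub_smul, sub_eq_zero]; exact hcd
    exact sub_eq_zero.mp (hwinj _ this)
  have hrange : LinearMap.range (LinearMap.toSpanSingleton A E w) = L :=
    (LinearMap.span_singleton_eq_range A E w).symm
  let eqv : A ≃ₗ[A] L :=
    (LinearEquiv.ofInjective _ hfinj).trans (LinearEquiv.ofEq _ _ hrange)
  have hLfree : Module.Free A L := Module.Free.of_equiv eqv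
  have hLrank : Module.rank A L = 1 := by
    have h := eqv.symm.lift_rank_eq
    rw [Module.rank_self, Cardinal.lift_one] at h
    exact Cardinal.lift_eq_one.mp h
  have hmap : L.map φ ≤ L := by
    rw [Ldef, Submodule.map_span, Set.image_singleton, Submodule.span_le,
      Set.singleton_subset_iff, hφw]
    exact Submodule.smul_mem _ _ hwmem
  refine ⟨L, ⟨⟨hLfree, hLrank⟩, hcompl, hmap⟩, ?_⟩
  rintro L' ⟨⟨hfree', hrank'⟩, hcompl', hmap'⟩
  haveI := hfree'
  obtain ⟨v, hgen', hinj'⟩ := gen_of_rank_one A L' hrank'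
  set w' : E := (v : E) with w'def
  have hw'L : w' ∈ L' := v.2
  have hspan' : ∀ x ∈ L', ∃ c : A, x = c • w' := by
    intro x hx
    obtain ⟨c, hc⟩ := hgen' ⟨x, hx⟩
    exact ⟨c, by simpa [Subtype.ext_iff] using hc⟩
  have hφw'mem : φ w' ∈ L' := hmap' (Submodule.mem_map_of_mem hw'L)
  obtain ⟨c, hc⟩ := hspan' (φ w') hφw'mem
  -- eb in terms of mkQ w'
  have hetop : e ∈ H ⊔ L' := by rw [codisjoint_iff.mp hcompl'.codisjoint]; trivial
  obtain ⟨h1, hh1, t, ht, hsum⟩ := Submodule.mem_sup.mp hetop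
  obtain ⟨d, hd⟩ := hspan' t ht
  have hebd : eb = d • H.mkQ w' := by
    rw [← he, ← hsum, map_add, hd, map_smul]
    rw [show H.mkQ h1 = 0 from by
      rw [Submodule.mkQ_apply, Submodule.Quotient.mk_eq_zero]; exact hh1, zero_add]
  have hreg : ∀ x : A, x • H.mkQ w' = 0 → x = 0 := by
    intro x hx
    apply hinj
    rw [hebd, smul_comm, hx, smul_zero]
  have hca : c = a := by
    have h1 : c • H.mkQ w' = a • H.mkQ w' := by
      have h2 := hhom w'
      rw [hc, Submodule.Quotient.mk_smul] at h2
      exact h2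
    have h3 : (c - a) • H.mkQ w' = 0 := by rw [sub_smul, h1, sub_self]
    exact sub_eq_zero.mp (hreg _ h3)
  have hφw' : φ w' = a • w' := by rw [hc, hca]
  have hw'top : w' ∈ H ⊔ L := by rw [codisjoint_iff.mp hcod]; trivial
  obtain ⟨h2, hh2, t2, ht2, hsum2⟩ := Submodule.mem_sup.mp hw'top
  obtain ⟨c', hc'⟩ := Submodule.mem_span_singleton.mp ht2
  have e1 : φ w' = h2 + a • t2 := by
    rw [← hsum2, map_add, hφH h2 hh2, ← hc', map_smul, hφw, smul_comm c' a w]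
  have e2 : φ w' = a • h2 + a • t2 := by rw [hφw', ← hsum2, smul_add]
  have hha : h2 = a • h2 := add_right_cancel (e1.symm.trans e2)
  have hh20 : h2 = 0 := by
    have h4 : (a - 1) • h2 = 0 := by rw [sub_smul, one_smul, ← hha, sub_self]
    have h5 : ((u : A)) • h2 = 0 := by rw [hu]; exact h4
    calc h2 = ((↑u⁻¹ : A)) • (((u : A)) • h2) := by
              rw [smul_smul, Units.inv_mul, one_smul]
      _ = 0 := by rw [h5, smul_zero]
  have hw'L2 : w' ∈ L := by rw [← hsum2, hh20, zero_add]; exact ht2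
  have hL'le : L' ≤ L := by
    intro x hx
    obtain ⟨cx, hcx⟩ := hspan' x hx
    rw [hcx]
    exact Submodule.smul_mem _ _ hw'L2
  have hmod := sup_inf_assoc_of_le H hL'le
  rw [sup_comm L' H, codisjoint_iff.mp hcompl'.codisjoint, disjoint_iff.mp hdisj,
    top_inf_eq, sup_bot_eq] at hmod
  exact hmod.symm
end

section
/- (Witt's theorem for symplectic modules) Let E be a free module of rank 2n over a field A, equipped with two symplectic forms ω₀ and ω₁, and let F be a submodule of E that is Lagrangian with respect to both ω₀ and ω₁. Then there exists an A-linear isomorphism φ : E → E with ω₁(φ(x), φ(y)) = ω₀(x, y) for all x, y ∈ E and φ|_F = id_F. -/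
set_option maxHeartbeats 1600000 in
theorem stmt_12 (A : Type*) [Field A] (E : Type*) [AddCommGroup E] [Module A E]
    [FiniteDimensional A E] (n : ℕ) (hdim : Module.finrank A E = 2 * n)
    (ω₀ ω₁ : E →ₗ[A] E →ₗ[A] A)
    (halt₀ : ∀ s : E, ω₀ s s = 0) (hnd₀ : ∀ s : E, (∀ t : E, ω₀ s t = 0) → s = 0)
    (halt₁ : ∀ s : E, ω₁ s s = 0) (hnd₁ : ∀ s : E, (∀ t : E, ω₁ s t = 0) → s = 0)
    (F : Submodule A E)
    (hLag₀ : ∀ x : E, x ∈ F ↔ ∀ y ∈ F, ω₀ y x = 0)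
    (hLag₁ : ∀ x : E, x ∈ F ↔ ∀ y ∈ F, ω₁ y x = 0) :
    ∃ φ : E ≃ₗ[A] E, (∀ x y : E, ω₁ (φ x) (φ y) = ω₀ x y) ∧ ∀ x ∈ F, φ x = x := by
  classical
  obtain ⟨G, hcompl⟩ := Submodule.exists_isCompl F
  -- skew-symmetry
  have skew₀ : ∀ x y : E, ω₀ x y = -ω₀ y x := by
    intro x y
    have h := halt₀ (x + y)
    simp only [map_add, LinearMap.add_apply] at h
    have hx := halt₀ x; have hy := halt₀ y
    linear_combination h - hx - hy
  have skew₁ : ∀ x y : E, ω₁ x y = -ω₁ y x := by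
    intro x y
    have h := halt₁ (x + y)
    simp only [map_add, LinearMap.add_apply] at h
    have hx := halt₁ x; have hy := halt₁ y
    linear_combination h - hx - hy
  -- F is isotropic
  have hFF₀ : ∀ x ∈ F, ∀ y ∈ F, ω₀ x y = 0 := fun x hx y hy => ((hLag₀ y).mp hy) x hx
  have hFF₁ : ∀ x ∈ F, ∀ y ∈ F, ω₁ x y = 0 := fun x hx y hy => ((hLag₁ y).mp hy) x hx
  -- dimension count : finrank F + finrank F = finrank E
  have hnd₀' : LinearMap.BilinForm.Nondegenerate ω₀ :=
    LinearMap.BilinForm.Nondegenerate.ofSeparatingLeft hnd₀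
  have hω₀surj : Function.Surjective (ω₀ : E → Module.Dual A E) := by
    intro ψ
    refine ⟨(LinearMap.BilinForm.toDual ω₀ hnd₀').symm ψ, ?_⟩
    ext t
    exact LinearMap.BilinForm.apply_toDual_symm_apply (hB := hnd₀') ψ t
  set L : E →ₗ[A] Module.Dual A F := F.subtype.dualMap ∘ₗ ω₀ with hL
  have hLsurj : Function.Surjective L :=
    (LinearMap.dualMap_surjective_of_injective F.injective_subtype).comp hω₀surj
  have hLker : LinearMap.ker L = F := by
    ext x
    simp only [LinearMap.mem_ker, hL, LinearMap.comp_apply]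
    constructor
    · intro h
      rw [hLag₀]
      intro y hy
      have := congrArg (fun ψ => ψ ⟨y, hy⟩) h
      simp only [LinearMap.dualMap_apply, LinearMap.zero_apply] at this
      have : ω₀ x y = 0 := this
      rw [skew₀ y x, this, neg_zero]
    · intro hx
      ext f
      have : ω₀ x (f : E) = 0 := ((hLag₀ (f : E)).mp f.2) x hx
      simpa using this
  have hdimF : Module.finrank A F + Module.finrank A F = Module.finrank A E := by
    have h1 := LinearMap.finrank_range_add_finrank_ker L
    rw [hLker, LinearMap.range_eq_top.mpr hLsurj] at h1
    rw [finrank_top, Subspace.dual_finrank_eq] at h1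
    exact h1
  have hGF : Module.finrank A G = Module.finrank A F := by
    have h2 := Submodule.finrank_add_eq_of_isCompl hcompl
    omega
  -- the map θ : G → G with ω₁ (θ g) f = ω₀ g f for f ∈ F
  set D₁ : G →ₗ[A] Module.Dual A F := F.subtype.dualMap ∘ₗ ω₁ ∘ₗ G.subtype with hD₁
  set D₀ : G →ₗ[A] Module.Dual A F := F.subtype.dualMap ∘ₗ ω₀ ∘ₗ G.subtype with hD₀
  have hD₁inj : Function.Injective D₁ := by
    rw [← LinearMap.ker_eq_bot]
    rw [Submodule.eq_bot_iff]
    intro g hg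
    rw [LinearMap.mem_ker] at hg
    have hgF : (g : E) ∈ F := by
      rw [hLag₁]
      intro y hy
      have := congrArg (fun ψ => ψ ⟨y, hy⟩) hg
      simp only [hD₁, LinearMap.comp_apply, LinearMap.dualMap_apply,
        LinearMap.zero_apply] at this
      have h3 : ω₁ (g : E) y = 0 := this
      rw [skew₁ y (g : E), h3, neg_zero]
    have : (g : E) = 0 := Submodule.disjoint_def.mp hcompl.disjoint (g : E) hgF g.2
    exact Subtype.ext this
  have hdual : Module.finrank A G = Module.finrank A (Module.Dual A F) := by
    rw [hGF, Subspace.dual_finrank_eq]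
  set e₁ : G ≃ₗ[A] Module.Dual A F := LinearMap.linearEquivOfInjective D₁ hD₁inj hdual with he₁
  set θ : G →ₗ[A] G := e₁.symm.toLinearMap ∘ₗ D₀ with hθdef
  have hθ : ∀ (g : G) (f : F), ω₁ (θ g : E) (f : E) = ω₀ (g : E) (f : E) := by
    intro g f
    calc ω₁ (θ g : E) (f : E) = (D₁ (θ g)) f := rfl
      _ = (e₁ (θ g)) f := by rw [LinearMap.linearEquivOfInjective_apply hD₁inj hdual]
      _ = (e₁ (e₁.symm (D₀ g))) f := rfl
      _ = (D₀ g) f := by rw [LinearEquiv.apply_symm_apply]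
      _ = ω₀ (g : E) (f : E) := rfl
  have hθ' : ∀ (f : F) (g : G), ω₁ (f : E) (θ g : E) = ω₀ (f : E) (g : E) := by
    intro f g
    rw [skew₁, hθ, ← skew₀]
  -- the correction map c : G → F
  set C₀ : F →ₗ[A] Module.Dual A G := G.subtype.dualMap ∘ₗ ω₀ ∘ₗ F.subtype with hC₀
  have hC₀inj : Function.Injective C₀ := by
    rw [← LinearMap.ker_eq_bot, Submodule.eq_bot_iff]
    intro f hf
    rw [LinearMap.mem_ker] at hf
    have hfG : ∀ g : G, ω₀ (f : E) (g : E) = 0 := by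
      intro g
      have := congrArg (fun ψ => ψ g) hf
      simpa [hC₀] using this
    have : (f : E) = 0 := by
      apply hnd₀
      intro t
      have ht : ((F.projectionOnto G hcompl t : E) + (G.projectionOnto F hcompl.symm t : E)) = t :=
        Submodule.projection_add_projection_eq_self hcompl t
      rw [← ht, map_add]
      rw [hFF₀ (f : E) f.2 _ (F.projectionOnto G hcompl t).2,
        hfG (G.projectionOnto F hcompl.symm t), add_zero]
    exact Subtype.ext this
  have hdual' : Module.finrank A F = Module.finrank A (Module.Dual A G) := by
    rw [Subspace.dual_finrank_eq, hGF]
  set eC : F ≃ₗ[A] Module.Dual A G := LinearMap.linearEquivOfInjective C₀ hC₀inj hdual'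
    with heC
  -- the "half" γ of the defect form
  set bG : Module.Basis (Fin (Module.finrank A G)) A G := Module.finBasis A G with hbG
  set γ : G →ₗ[A] G →ₗ[A] A := bG.constr A fun i => bG.constr A fun j =>
    if i < j then (ω₁ (θ (bG i) : E) (θ (bG j) : E) - ω₀ (bG i : E) (bG j : E)) else 0 with hγ
  set Bθ : G →ₗ[A] G →ₗ[A] A := ω₁.compl₁₂ (G.subtype ∘ₗ θ) (G.subtype ∘ₗ θ) with hBθ
  set BG : G →ₗ[A] G →ₗ[A] A := ω₀.compl₁₂ G.subtype G.subtype with hBG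
  have hbil : Bθ = BG + (γ - γ.flip) := by
    apply LinearMap.ext_basis bG bG
    intro i j
    have hγapp : ∀ k l, γ (bG k) (bG l) =
        if k < l then (ω₁ (θ (bG k) : E) (θ (bG l) : E) - ω₀ (bG k : E) (bG l : E)) else 0 := by
      intro k l
      rw [hγ, Module.Basis.constr_basis, Module.Basis.constr_basis]
    simp only [hBθ, hBG, LinearMap.compl₁₂_apply, LinearMap.add_apply, LinearMap.sub_apply,
      LinearMap.flip_apply, LinearMap.comp_apply, Submodule.coe_subtype]
    rw [hγapp i j, hγapp j i]
    rcases lt_trichotomy i j with h | h | h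
    · rw [if_pos h, if_neg (not_lt.mpr h.le)]
      ring
    · subst h
      simp only [lt_self_iff_false, if_false]
      rw [halt₁, halt₀]
      ring
    · rw [if_neg (not_lt.mpr h.le), if_pos h]
      rw [skew₁ (θ (bG i) : E) (θ (bG j) : E), skew₀ (bG i : E) (bG j : E)]
      ring
  have hkey : ∀ g g' : G, ω₁ (θ g : E) (θ g' : E) =
      ω₀ (g : E) (g' : E) + (γ g g' - γ g' g) := by
    intro g g'
    have := LinearMap.congr_fun (LinearMap.congr_fun hbil g) g'
    simpa only [hBθ, hBG, LinearMap.compl₁₂_apply, LinearMap.add_apply, LinearMap.sub_apply,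
      LinearMap.flip_apply, LinearMap.comp_apply, Submodule.coe_subtype] using this
  set c : G →ₗ[A] F := eC.symm.toLinearMap ∘ₗ (-γ) with hcdef
  have hcω : ∀ g g' : G, ω₀ (c g : E) (g' : E) = -(γ g g') := by
    intro g g'
    calc ω₀ (c g : E) (g' : E) = (C₀ (c g)) g' := rfl
      _ = (eC (c g)) g' := by rw [LinearMap.linearEquivOfInjective_apply hC₀inj hdual']
      _ = (eC (eC.symm ((-γ) g))) g' := rfl
      _ = ((-γ) g) g' := by rw [LinearEquiv.apply_symm_apply]
      _ = -(γ g g') := by simp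
  -- the symplectomorphism
  set p : E →ₗ[A] F := F.projectionOnto G hcompl with hp
  set q : E →ₗ[A] G := G.projectionOnto F hcompl.symm with hq
  set φ₀ : E →ₗ[A] E :=
    F.subtype ∘ₗ p + F.subtype ∘ₗ c ∘ₗ q + G.subtype ∘ₗ θ ∘ₗ q with hφ₀def
  have hφ₀ : ∀ x : E, φ₀ x = (p x : E) + (c (q x) : E) + (θ (q x) : E) := fun x => rfl
  have hsplit : ∀ x : E, ((p x : E) + (q x : E)) = x :=
    Submodule.projection_add_projection_eq_self hcompl
  have hsympl : ∀ x y : E, ω₁ (φ₀ x) (φ₀ y) = ω₀ x y := by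
    intro x y
    conv_rhs => rw [← hsplit x, ← hsplit y]
    rw [hφ₀ x, hφ₀ y]
    simp only [map_add, LinearMap.add_apply]
    rw [hFF₁ _ (p x).2 _ (p y).2, hFF₁ _ (p x).2 _ (c (q y)).2, hθ' (p x) (q y),
      hFF₁ _ (c (q x)).2 _ (p y).2, hFF₁ _ (c (q x)).2 _ (c (q y)).2,
      hθ' (c (q x)) (q y), hcω (q x) (q y),
      hθ (q x) (p y), hθ (q x) (c (q y)), hkey (q x) (q y),
      hFF₀ _ (p x).2 _ (p y).2]
    rw [skew₀ ((q x : E)) ((c (q y) : E)), hcω (q y) (q x)]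
    ring
  have hinj : Function.Injective φ₀ := by
    intro a b hab
    rw [← sub_eq_zero]
    have h0 : φ₀ (a - b) = 0 := by rw [map_sub, hab, sub_self]
    apply hnd₀
    intro t
    have h5 := hsympl (a - b) t
    rw [h0] at h5
    simpa using h5.symm
  have hsurj : Function.Surjective φ₀ :=
    (LinearMap.injective_iff_surjective_of_finrank_eq_finrank rfl).mp hinj
  refine ⟨LinearEquiv.ofBijective φ₀ ⟨hinj, hsurj⟩, fun x y => hsympl x y, fun x hx => ?_⟩
  show φ₀ x = x
  have hqx : q x = 0 := Submodule.projectionOnto_apply_of_mem_right hcompl.symm hx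
  have hpx : (p x : E) = x := by
    have := hsplit x
    rw [hqx] at this
    simpa using this
  rw [hφ₀, hqx, map_zero, map_zero, hpx]
  simp
end
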